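/- Let n ≥ 2 and z, w ∈ ℂ∖{0}. Define the complex matrix Δ_n(z,w) indexed by pairs (x,y) with x, y ∈ ℤ/nℤ (represented by {0,…,n−1}) as follows: the diagonal entries are Δ_{(x,y),(x,y)} = 4; the horizontal off-diagonal entries are Δ_{(x,y),(x+1,y)} = −z if x = n−1 and −1 otherwise, and Δ_{(x,y),(x−1,y)} = −z⁻¹ if x = 0 and −1 otherwise; the vertical off-diagonal entries are Δ_{(x,y),(x,y+1)} = −w if y = n−1 and −1 otherwise, and Δ_{(x,y),(x,y−1)} = −w⁻¹ if y = 0 and −1 otherwise; all other entries are 0 (here x±1, y±1 are taken mod n). Then det Δ_n(z,w) = ∏_{ξ : ξⁿ = z} ∏_{η : ηⁿ = w} (4 − ξ − ξ⁻¹ − η − η⁻¹). -/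

import Mathlib

open Matrix BigOperators

lemma aux1 {n x : ℕ} (hn : 2 ≤ n) (hx : x < n) {u z : ℂ} (hu : u ^ n = z) :
    (if x = n - 1 then -z else -1) * u ^ ((x + 1) % n) = -u * u ^ x := by
  have hkey : u ^ (n - 1) * u = z := by
    rw [← pow_succ, Nat.sub_add_cancel (by omega), hu]
  by_cases h : x = n - 1
  · subst h
    rw [if_pos rfl, Nat.sub_add_cancel (by omega), Nat.mod_self, pow_zero, ← hkey]
    ring
  · rw [if_neg h, Nat.mod_eq_of_lt (by omega), pow_succ]
    ring

lemma aux2 {n x : ℕ} (hn : 2 ≤ n) (hx : x < n) {u z : ℂ} (hu0 : u ≠ 0) (hu : u ^ n = z) :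
    (if x = 0 then -z⁻¹ else -1) * u ^ ((n - 1 + x) % n) = -u⁻¹ * u ^ x := by
  have hz0 : z ≠ 0 := by rw [← hu]; exact pow_ne_zero _ hu0
  have hkey : u ^ (n - 1) * u = z := by
    rw [← pow_succ, Nat.sub_add_cancel (by omega), hu]
  by_cases h : x = 0
  · subst h
    rw [if_pos rfl, Nat.add_zero, Nat.mod_eq_of_lt (by omega), pow_zero]
    field_simp
    linear_combination -hkey
  · rw [if_neg h, show n - 1 + x = (x - 1) + n by omega, Nat.add_mod_right,
      Nat.mod_eq_of_lt (by omega)]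
    have hx1 : u ^ x = u ^ (x - 1) * u := by
      rw [← pow_succ, Nat.sub_add_cancel (by omega)]
    rw [hx1]
    field_simp

theorem stmt_17 (n : ℕ) (hn : 2 ≤ n) (z w : ℂ) (hz : z ≠ 0) (hw : w ≠ 0)
    (Δ : Matrix (Fin n × Fin n) (Fin n × Fin n) ℂ)
    (hΔ : ∀ p q : Fin n × Fin n, Δ p q =
      (if q = p then 4 else 0)
      + (if q.2 = p.2 ∧ q.1 = p.1 + ⟨1, by omega⟩ then (if (p.1 : ℕ) = n - 1 then -z else -1) else 0)
      + (if q.2 = p.2 ∧ q.1 + ⟨1, by omega⟩ = p.1 then (if (p.1 : ℕ) = 0 then -z⁻¹ else -1) else 0)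
      + (if q.1 = p.1 ∧ q.2 = p.2 + ⟨1, by omega⟩ then (if (p.2 : ℕ) = n - 1 then -w else -1) else 0)
      + (if q.1 = p.1 ∧ q.2 + ⟨1, by omega⟩ = p.2 then (if (p.2 : ℕ) = 0 then -w⁻¹ else -1) else 0)) :
    Δ.det = ((Polynomial.nthRoots n z).map (fun ξ =>
        ((Polynomial.nthRoots n w).map (fun η => 4 - ξ - ξ⁻¹ - η - η⁻¹)).prod)).prod := by
  have hn0 : n ≠ 0 := by omega
  haveI : NeZero n := ⟨hn0⟩
  set ζ : ℂ := Complex.exp (2 * Real.pi * Complex.I / n) with hζdef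
  have hζ : IsPrimitiveRoot ζ n := Complex.isPrimitiveRoot_exp n hn0
  obtain ⟨c, hc⟩ : ∃ c : ℂ, c ^ n = z := ⟨z ^ ((n : ℂ))⁻¹, Complex.cpow_nat_inv_pow z hn0⟩
  obtain ⟨d, hd⟩ : ∃ d : ℂ, d ^ n = w := ⟨w ^ ((n : ℂ))⁻¹, Complex.cpow_nat_inv_pow w hn0⟩
  have hc0 : c ≠ 0 := fun h => hz (by rw [← hc, h, zero_pow hn0])
  have hd0 : d ≠ 0 := fun h => hw (by rw [← hd, h, zero_pow hn0])
  set ξ : Fin n → ℂ := fun i => ζ ^ (i : ℕ) * c with hξdef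
  set η : Fin n → ℂ := fun j => ζ ^ (j : ℕ) * d with hηdef
  have hξn : ∀ i, ξ i ^ n = z := by
    intro i
    show (ζ ^ (i : ℕ) * c) ^ n = z
    rw [mul_pow, ← pow_mul, mul_comm (i : ℕ) n, pow_mul, hζ.pow_eq_one, one_pow, one_mul, hc]
  have hηn : ∀ j, η j ^ n = w := by
    intro j
    show (ζ ^ (j : ℕ) * d) ^ n = w
    rw [mul_pow, ← pow_mul, mul_comm (j : ℕ) n, pow_mul, hζ.pow_eq_one, one_pow, one_mul, hd]
  have hξ0 : ∀ i, ξ i ≠ 0 := fun i h => hz (by rw [← hξn i, h, zero_pow hn0])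
  have hη0 : ∀ j, η j ≠ 0 := fun j h => hw (by rw [← hηn j, h, zero_pow hn0])
  have hξinj : Function.Injective ξ := by
    intro i j h
    exact Fin.ext (hζ.pow_inj i.isLt j.isLt (mul_right_cancel₀ hc0 h))
  have hηinj : Function.Injective η := by
    intro i j h
    exact Fin.ext (hζ.pow_inj i.isLt j.isLt (mul_right_cancel₀ hd0 h))
  set lam : Fin n × Fin n → ℂ := fun k => 4 - ξ k.1 - (ξ k.1)⁻¹ - η k.2 - (η k.2)⁻¹ with hlam
  set P : Matrix (Fin n × Fin n) (Fin n × Fin n) ℂ :=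
    fun p k => ξ k.1 ^ (p.1 : ℕ) * η k.2 ^ (p.2 : ℕ) with hP
  have key : Δ * P = P * Matrix.diagonal lam := by
    ext p k
    rw [Matrix.mul_diagonal, Matrix.mul_apply]
    have e1 : ∀ q : Fin n × Fin n,
        (q.2 = p.2 ∧ q.1 = p.1 + (⟨1, by omega⟩ : Fin n)) ↔ q = (p.1 + ⟨1, by omega⟩, p.2) := by
      intro q; rw [Prod.ext_iff]; exact and_comm
    have e2 : ∀ q : Fin n × Fin n,
        (q.2 = p.2 ∧ q.1 + (⟨1, by omega⟩ : Fin n) = p.1) ↔ q = (p.1 - ⟨1, by omega⟩, p.2) := by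
      intro q; rw [Prod.ext_iff, ← eq_sub_iff_add_eq]; exact and_comm
    have e3 : ∀ q : Fin n × Fin n,
        (q.1 = p.1 ∧ q.2 = p.2 + (⟨1, by omega⟩ : Fin n)) ↔ q = (p.1, p.2 + ⟨1, by omega⟩) := by
      intro q; rw [Prod.ext_iff]
    have e4 : ∀ q : Fin n × Fin n,
        (q.1 = p.1 ∧ q.2 + (⟨1, by omega⟩ : Fin n) = p.2) ↔ q = (p.1, p.2 - ⟨1, by omega⟩) := by
      intro q; rw [Prod.ext_iff, ← eq_sub_iff_add_eq]
    have step1 : ∑ q : Fin n × Fin n, Δ p q * P q k =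
        ∑ q : Fin n × Fin n,
          ((if q = p then 4 * P q k else 0)
          + (if q = (p.1 + ⟨1, by omega⟩, p.2) then
              (if (p.1 : ℕ) = n - 1 then -z else -1) * P q k else 0)
          + (if q = (p.1 - ⟨1, by omega⟩, p.2) then
              (if (p.1 : ℕ) = 0 then -z⁻¹ else -1) * P q k else 0)
          + (if q = (p.1, p.2 + ⟨1, by omega⟩) then
              (if (p.2 : ℕ) = n - 1 then -w else -1) * P q k else 0)
          + (if q = (p.1, p.2 - ⟨1, by omega⟩) then
              (if (p.2 : ℕ) = 0 then -w⁻¹ else -1) * P q k else 0)) := by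
      refine Finset.sum_congr rfl fun q _ => ?_
      rw [hΔ]
      simp only [e1 q, e2 q, e3 q, e4 q, add_mul, ite_mul, zero_mul]
    rw [step1]
    simp only [Finset.sum_add_distrib, Finset.sum_ite_eq' Finset.univ, Finset.mem_univ, if_true]
    have v1 : Fin.val (p.1 + (⟨1, by omega⟩ : Fin n)) = ((p.1 : ℕ) + 1) % n := rfl
    have v2 : Fin.val (p.1 - (⟨1, by omega⟩ : Fin n)) = (n - 1 + (p.1 : ℕ)) % n := rfl
    have v3 : Fin.val (p.2 + (⟨1, by omega⟩ : Fin n)) = ((p.2 : ℕ) + 1) % n := rfl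
    have v4 : Fin.val (p.2 - (⟨1, by omega⟩ : Fin n)) = (n - 1 + (p.2 : ℕ)) % n := rfl
    have h1 := aux1 hn p.1.isLt (hξn k.1)
    have h2 := aux2 hn p.1.isLt (hξ0 k.1) (hξn k.1)
    have h3 := aux1 hn p.2.isLt (hηn k.2)
    have h4 := aux2 hn p.2.isLt (hη0 k.2) (hηn k.2)
    simp only [hP, hlam]
    rw [v1, v2, v3, v4]
    linear_combination (η k.2 ^ (p.2 : ℕ)) * h1 + (η k.2 ^ (p.2 : ℕ)) * h2
      + (ξ k.1 ^ (p.1 : ℕ)) * h3 + (ξ k.1 ^ (p.1 : ℕ)) * h4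
  have hPdet : P.det ≠ 0 := by
    have hPeq : P = Matrix.kroneckerMap (· * ·) (Matrix.vandermonde ξ)ᵀ (Matrix.vandermonde η)ᵀ := by
      ext p k
      simp [hP, Matrix.kroneckerMap, Matrix.vandermonde, Matrix.transpose_apply]
    rw [hPeq, Matrix.det_kronecker, Matrix.det_transpose, Matrix.det_transpose]
    exact mul_ne_zero (pow_ne_zero _ (Matrix.det_vandermonde_ne_zero_iff.mpr hξinj))
      (pow_ne_zero _ (Matrix.det_vandermonde_ne_zero_iff.mpr hηinj))
  have hdet : Δ.det = (Matrix.diagonal lam).det := by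
    have h := congrArg Matrix.det key
    rw [Matrix.det_mul, Matrix.det_mul] at h
    exact mul_right_cancel₀ hPdet (by rw [h]; ring)
  rw [hdet, Matrix.det_diagonal]
  rw [hζ.nthRoots_eq hc, hζ.nthRoots_eq hd]
  rw [← Finset.range_val, Multiset.map_map, ← Finset.prod_eq_multiset_prod]
  rw [Fintype.prod_prod_type]
  rw [← Fin.prod_univ_eq_prod_range (fun i => _)]
  apply Finset.prod_congr rfl
  intro i _
  simp only [Function.comp]
  rw [Multiset.map_map, ← Finset.prod_eq_multiset_prod,
    ← Fin.prod_univ_eq_prod_range (fun j => _)]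
  apply Finset.prod_congr rfl
  intro j _
  rfl
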